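/- If X and Y are normed spaces and F : X ⇉ Y has a convex graph, then the modulus of openness of F at (x̄,ȳ) equals the modulus of surjection of F around (x̄,ȳ). -/

import Mathlib

open Metric Set Filter Topology
open scoped ENNReal NNReal

noncomputable section

/-- The image of a set under a set-valued mapping. -/
def SVImage {X Y : Type*} (F : X → Set Y) (s : Set X) : Set Y := ⋃ x ∈ s, F x

/-- The modulus of openness (openness with a linear rate at a point). -/
def lopenMod {X Y : Type*} [PseudoMetricSpace X] [PseudoMetricSpace Y]
    (F : X → Set Y) (xb : X) (yb : Y) : ℝ≥0∞ :=
  sSup (ENNReal.ofReal '' {c : ℝ | 0 < c ∧ ∃ ε > (0:ℝ), ∀ t ∈ Ioo (0:ℝ) ε,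
    closedBall yb (c * t) ⊆ SVImage F (closedBall xb t)})

/-- The modulus of surjection (openness with a linear rate around a point). -/
def surMod {X Y : Type*} [PseudoMetricSpace X] [PseudoMetricSpace Y]
    (F : X → Set Y) (xb : X) (yb : Y) : ℝ≥0∞ :=
  sSup (ENNReal.ofReal '' {c : ℝ | 0 < c ∧ ∃ ε > (0:ℝ), ∃ U ∈ 𝓝 xb, ∃ V ∈ 𝓝 yb,
    ∀ x ∈ U, ∀ y ∈ V, y ∈ F x → ∀ t ∈ Ioo (0:ℝ) ε,
      closedBall y (c * t) ⊆ SVImage F (closedBall x t)})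

/-- The semiregularity modulus. -/
def semiregMod {X Y : Type*} [PseudoMetricSpace X] [PseudoMetricSpace Y]
    (F : X → Set Y) (xb : X) (yb : Y) : ℝ≥0∞ :=
  sInf (ENNReal.ofReal '' {κ : ℝ | 0 < κ ∧ ∃ V ∈ 𝓝 yb, ∀ y ∈ V,
    EMetric.infEdist xb {x | y ∈ F x} ≤ ENNReal.ofReal (κ * dist yb y)})

/-- The Lipschitz (Aubin) modulus of a set-valued mapping. -/
def lipMod {X Y : Type*} [PseudoMetricSpace X] [PseudoMetricSpace Y]
    (G : X → Set Y) (xb : X) (zb : Y) : ℝ≥0∞ :=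
  sInf (ENNReal.ofReal '' {μ : ℝ | 0 < μ ∧ ∃ U ∈ 𝓝 xb, ∃ V ∈ 𝓝 zb,
    ∀ x ∈ U, ∀ x' ∈ U, ∀ z ∈ G x' ∩ V,
      EMetric.infEdist z (G x) ≤ ENNReal.ofReal (μ * dist x x')})

/-- The calmness modulus of a single-valued mapping. -/
def calmMod {X Y : Type*} [PseudoMetricSpace X] [PseudoMetricSpace Y]
    (f : X → Y) (xb : X) : ℝ≥0∞ :=
  sInf (ENNReal.ofReal '' {μ : ℝ | 0 < μ ∧ ∃ U ∈ 𝓝 xb, ∀ x ∈ U,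
    dist (f x) (f xb) ≤ μ * dist x xb})

end


private lemma key_sub {X Y : Type*}
    [NormedAddCommGroup X] [NormedSpace ℝ X] [NormedAddCommGroup Y] [NormedSpace ℝ Y]
    (F : X → Set Y) (xb : X) (yb : Y)
    (hconv : Convex ℝ {p : X × Y | p.2 ∈ F p.1})
    {c c' ε : ℝ} (hc' : 0 < c') (hlt : c' < c) (hε : 0 < ε)
    (h : ∀ t ∈ Ioo (0:ℝ) ε, closedBall yb (c * t) ⊆ SVImage F (closedBall xb t)) :
    ∃ ε' > (0:ℝ), ∃ U ∈ 𝓝 xb, ∃ V ∈ 𝓝 yb,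
      ∀ x ∈ U, ∀ y ∈ V, y ∈ F x → ∀ t ∈ Ioo (0:ℝ) ε',
        closedBall y (c' * t) ⊆ SVImage F (closedBall x t) := by
  have hc : 0 < c := hc'.trans hlt
  set θ := ε / 2 with hθdef
  set δ := ε * (c - c') / 8 with hδdef
  set δ' := δ / c with hδ'def
  set s := (c' * θ + δ) / c with hsdef
  have hθ0 : 0 < θ := half_pos hε
  have hδ0 : 0 < δ := div_pos (mul_pos hε (sub_pos.2 hlt)) (by norm_num)
  have hδ'0 : 0 < δ' := div_pos hδ0 hc
  have hcδ' : c * δ' = δ := by rw [hδ'def]; field_simp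
  have hcs : c * s = c' * θ + δ := by rw [hsdef]; field_simp
  have hs0 : 0 < s := div_pos (add_pos (mul_pos hc' hθ0) hδ0) hc
  have hsε : s < ε := by
    rw [hsdef, div_lt_iff₀ hc]; rw [hθdef] at *; rw [hδdef]; nlinarith
  have hsum : s + δ' ≤ θ := by
    rw [← mul_le_mul_iff_right₀ hc, mul_add, hcs, hcδ']
    rw [hθdef] at *; rw [hδdef] at *; nlinarith
  refine ⟨θ, hθ0, ball xb δ', ball_mem_nhds _ hδ'0, ball yb δ, ball_mem_nhds _ hδ0, ?_⟩
  intro x hx y hy hyF t ht v hv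
  have ht0 : 0 < t := ht.1
  have htθ : t < θ := ht.2
  set l := t / θ with hldef
  have hl0 : 0 < l := div_pos ht0 hθ0
  have hl1 : l < 1 := (div_lt_one hθ0).2 htθ
  have hlinvt : l⁻¹ * t = θ := by
    rw [hldef, inv_div, div_mul_cancel₀ _ ht0.ne']
  set z := y + l⁻¹ • (v - y) with hzdef
  have hzb : ‖z - yb‖ ≤ c * s := by
    have h1 : z - yb = (y - yb) + l⁻¹ • (v - y) := by rw [hzdef]; abel
    have h2 : ‖z - yb‖ ≤ ‖y - yb‖ + l⁻¹ * ‖v - y‖ := by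
      rw [h1]
      refine (norm_add_le _ _).trans ?_
      rw [norm_smul, Real.norm_eq_abs, abs_of_pos (inv_pos.2 hl0)]
    have h3 : ‖y - yb‖ ≤ δ := by
      have := mem_ball.mp hy; rw [dist_eq_norm] at this; linarith
    have h4 : ‖v - y‖ ≤ c' * t := by
      have := mem_closedBall.mp hv; rwa [dist_eq_norm] at this
    have h5 : l⁻¹ * ‖v - y‖ ≤ l⁻¹ * (c' * t) :=
      mul_le_mul_of_nonneg_left h4 (inv_pos.2 hl0).le
    have h6 : l⁻¹ * (c' * t) = c' * θ := by rw [← hlinvt]; ring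
    rw [hcs]; linarith
  have hzmem : z ∈ SVImage F (closedBall xb s) := by
    refine h s ⟨hs0, hsε⟩ ?_
    rw [mem_closedBall, dist_eq_norm]; exact hzb
  rw [SVImage, mem_iUnion₂] at hzmem
  obtain ⟨x', hx'ball, hzx'⟩ := hzmem
  have hcomb := hconv (show ((x', z) : X × Y) ∈ _ from hzx')
    (show ((x, y) : X × Y) ∈ _ from hyF) hl0.le (by linarith : (0:ℝ) ≤ 1 - l) (by ring)
  have hcomb' : l • z + (1 - l) • y ∈ F (l • x' + (1 - l) • x) := hcomb
  have hveq : l • z + (1 - l) • y = v := by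
    rw [hzdef, smul_add, smul_smul, mul_inv_cancel₀ hl0.ne', one_smul, sub_smul, one_smul]
    abel
  rw [hveq] at hcomb'
  have hux : ‖(l • x' + (1 - l) • x) - x‖ ≤ t := by
    have h1 : (l • x' + (1 - l) • x) - x = l • (x' - x) := by
      rw [sub_smul, one_smul, smul_sub]; abel
    rw [h1, norm_smul, Real.norm_eq_abs, abs_of_pos hl0]
    have h2 : ‖x' - x‖ ≤ ‖x' - xb‖ + ‖xb - x‖ := norm_sub_le_norm_sub_add_norm_sub _ _ _
    have h3 : ‖x' - xb‖ ≤ s := by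
      have := mem_closedBall.mp hx'ball; rwa [dist_eq_norm] at this
    have h4 : ‖xb - x‖ ≤ δ' := by
      have := mem_ball.mp hx; rw [dist_eq_norm] at this
      rw [norm_sub_rev]; linarith
    have h5 : l * ‖x' - x‖ ≤ l * θ :=
      mul_le_mul_of_nonneg_left (by linarith) hl0.le
    have h6 : l * θ = t := by rw [hldef, div_mul_cancel₀ _ hθ0.ne']
    linarith
  rw [SVImage, mem_iUnion₂]
  exact ⟨l • x' + (1 - l) • x, by rw [mem_closedBall, dist_eq_norm]; exact hux, hcomb'⟩

/-- if `F` between normed spaces has a convex graph, then the modulus of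
openness of `F` at `(xb,yb)` equals the modulus of surjection of `F` around `(xb,yb)`. -/
theorem lopen_eq_sur_of_convexGraph {X Y : Type*}
    [NormedAddCommGroup X] [NormedSpace ℝ X] [NormedAddCommGroup Y] [NormedSpace ℝ Y]
    (F : X → Set Y) (xb : X) (yb : Y) (hgraph : yb ∈ F xb)
    (hconv : Convex ℝ {p : X × Y | p.2 ∈ F p.1}) :
    lopenMod F xb yb = surMod F xb yb := by
  apply le_antisymm
  · -- lopen ≤ sur
    apply sSup_le
    rintro a ⟨c, ⟨hc, ε, hε, hF⟩, rfl⟩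
    refine le_of_forall_lt fun b hb => ?_
    have hbtop : b ≠ ⊤ := (hb.trans (ENNReal.ofReal_lt_top)).ne
    have hr : b.toReal < c := by
      rwa [ENNReal.lt_ofReal_iff_toReal_lt hbtop] at hb
    set c' : ℝ := (max b.toReal (c / 2) + c) / 2 with hc'def
    have hc'0 : 0 < c' := by
      have : 0 < c / 2 := by linarith
      have : c / 2 ≤ max b.toReal (c / 2) := le_max_right _ _
      rw [hc'def]; linarith
    have hc'c : c' < c := by
      have h1 : max b.toReal (c / 2) < c := max_lt hr (by linarith)
      rw [hc'def]; linarith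
    have hbc' : b < ENNReal.ofReal c' := by
      rw [ENNReal.lt_ofReal_iff_toReal_lt hbtop]
      have : b.toReal ≤ max b.toReal (c / 2) := le_max_left _ _
      rw [hc'def]; linarith
    refine hbc'.trans_le (le_sSup ?_)
    exact ⟨c', ⟨hc'0, key_sub F xb yb hconv hc'0 hc'c hε hF⟩, rfl⟩
  · -- sur ≤ lopen
    apply sSup_le_sSup
    apply image_mono
    rintro c ⟨hc, ε, hε, U, hU, V, hV, h⟩
    exact ⟨hc, ε, hε, h xb (mem_of_mem_nhds hU) yb (mem_of_mem_nhds hV) hgraph⟩
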